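/- The multilinear polynomial ABC over ℤ_p in indeterminates A, B, C, X, Z₁, Z₂ is not in the ℤ_p-span of the set of products {P_i·P_j}, where P = {1, X, A, XA, B, XB, AB + XZ₁, Z₁, C + XZ₂, Z₂}. Equivalently, no ℤ_p-linear combination of pairwise products of elements of P equals ABC. -/
import Mathlib

set_option maxHeartbeats 6000000 in
open MvPolynomial in
theorem stmt_15 (p : ℕ) [Fact p.Prime] :
    let A : MvPolynomial (Fin 6) (ZMod p) := X 0
    let B : MvPolynomial (Fin 6) (ZMod p) := X 1
    let C : MvPolynomial (Fin 6) (ZMod p) := X 2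
    let Xv : MvPolynomial (Fin 6) (ZMod p) := X 3
    let Z₁ : MvPolynomial (Fin 6) (ZMod p) := X 4
    let Z₂ : MvPolynomial (Fin 6) (ZMod p) := X 5
    let P : Fin 10 → MvPolynomial (Fin 6) (ZMod p) :=
      ![1, Xv, A, Xv * A, B, Xv * B, A * B + Xv * Z₁, Z₁, C + Xv * Z₂, Z₂]
    A * B * C ∉ Submodule.span (ZMod p)
      (Set.range fun ij : Fin 10 × Fin 10 => P ij.1 * P ij.2) := by
  intro A B C Xv Z₁ Z₂ P h
  set ev : MvPolynomial (Fin 6) (ZMod p) →ₗ[ZMod p] ZMod p :=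
    (aeval (0 : Fin 6 → ZMod p)).toLinearMap with hev
  set d : Fin 6 → (MvPolynomial (Fin 6) (ZMod p) →ₗ[ZMod p] MvPolynomial (Fin 6) (ZMod p)) :=
    fun i => (pderiv i).toLinearMap with hd
  set φ : MvPolynomial (Fin 6) (ZMod p) →ₗ[ZMod p] ZMod p :=
    (ev ∘ₗ d 0 ∘ₗ d 1 ∘ₗ d 2) - (ev ∘ₗ d 0 ∘ₗ d 1 ∘ₗ d 3 ∘ₗ d 5) with hφ
  have hker : Submodule.span (ZMod p)
      (Set.range fun ij : Fin 10 × Fin 10 => P ij.1 * P ij.2) ≤ LinearMap.ker φ := by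
    rw [Submodule.span_le]
    rintro - ⟨⟨i, j⟩, rfl⟩
    simp only [SetLike.mem_coe, LinearMap.mem_ker, hφ, hev, hd, LinearMap.sub_apply,
      LinearMap.comp_apply, AlgHom.toLinearMap_apply, Derivation.coeFn_coe, sub_eq_zero]
    fin_cases i <;> fin_cases j <;>
      simp +decide [show P 0 = 1 from rfl, show P 1 = X 3 from rfl, show P 2 = X 0 from rfl,
        show P 3 = X 3 * X 0 from rfl, show P 4 = X 1 from rfl, show P 5 = X 3 * X 1 from rfl,
        show P 6 = X 0 * X 1 + X 3 * X 4 from rfl, show P 7 = X 4 from rfl,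
        show P 8 = X 2 + X 3 * X 5 from rfl, show P 9 = X 5 from rfl, pderiv_mul, pderiv_X]
  have h0 := hker h
  simp only [LinearMap.mem_ker, hφ, hev, hd, LinearMap.sub_apply, LinearMap.comp_apply,
    AlgHom.toLinearMap_apply, Derivation.coeFn_coe] at h0
  simp +decide [show A * B * C = X 0 * X 1 * X 2 from rfl, pderiv_mul, pderiv_X] at h0
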